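/- Let Λ ∈ R* with Hankel operator H_Λ of finite rank. Then the dual space of the quotient algebra A_Λ = R/I_Λ can be identified with the inverse system D = {q ⋆ Λ : q ∈ R}, and A_Λ is a Gorenstein algebra (i.e., its dual is a free A_Λ-module of rank 1 generated by Λ). -/
import Mathlib

open MvPolynomial

/-- The Hankel operator `H_Λ : p ↦ (q ↦ Λ(pq))`. -/
noncomputable def hankelOp (K : Type*) [Field K] (n : ℕ)
    (Λ : Module.Dual K (MvPolynomial (Fin n) K)) :
    MvPolynomial (Fin n) K →ₗ[K] Module.Dual K (MvPolynomial (Fin n) K) :=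
  (LinearMap.mul K (MvPolynomial (Fin n) K)).compr₂ Λ

/-- The kernel ideal `I_Λ = {p : ∀ q, Λ(pq) = 0}`. -/
def hankelIdeal (K : Type*) [Field K] (n : ℕ)
    (Λ : Module.Dual K (MvPolynomial (Fin n) K)) : Ideal (MvPolynomial (Fin n) K) where
  carrier := {p | ∀ q, Λ (p * q) = 0}
  add_mem' := by
    intro a b ha hb q
    rw [Set.mem_setOf_eq] at ha hb
    rw [add_mul, map_add, ha q, hb q, add_zero]
  zero_mem' := by
    intro q
    rw [zero_mul, map_zero]
  smul_mem' := by
    intro c p hp q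
    rw [Set.mem_setOf_eq] at hp
    have h : (c • p) * q = p * (c * q) := by rw [smul_eq_mul]; ring
    rw [h]
    exact hp _

/-- The evaluation functional `1_ζ : p ↦ p(ζ)`. -/
noncomputable def evalDual (K : Type*) [Field K] (n : ℕ) (ζ : Fin n → K) :
    Module.Dual K (MvPolynomial (Fin n) K) :=
  (MvPolynomial.aeval ζ).toLinearMap

set_option maxHeartbeats 1000000 in
/-- The dual of `A_Λ = R/I_Λ` is identified with the inverse system `D = {q ⋆ Λ}`,
and `A_Λ` is Gorenstein (the induced bilinear form on the quotient is non-degenerate). -/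
theorem dual_eq_inverse_system_and_gorenstein (K : Type*) [Field K] (n : ℕ)
    (Λ : Module.Dual K (MvPolynomial (Fin n) K))
    (hfin : Module.Finite K ↥(LinearMap.range (hankelOp K n Λ))) :
    LinearMap.range ((Ideal.Quotient.mkₐ K (hankelIdeal K n Λ)).toLinearMap.dualMap)
      = LinearMap.range (hankelOp K n Λ) ∧
    ∀ p : MvPolynomial (Fin n) K, (∀ q, Λ (p * q) = 0) →
      Ideal.Quotient.mk (hankelIdeal K n Λ) p = 0 := by
  set R := MvPolynomial (Fin n) K
  set I := hankelIdeal K n Λ with hI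
  set H := hankelOp K n Λ with hH
  have hmem : ∀ p : R, p ∈ I ↔ ∀ q, Λ (p * q) = 0 := fun p => Iff.rfl
  have hHapp : ∀ p q : R, H p q = Λ (p * q) := fun p q => rfl
  -- kernel of H is I (as K-submodule)
  have hker : LinearMap.ker H = I.restrictScalars K := by
    ext p
    simp only [LinearMap.mem_ker, Submodule.restrictScalars_mem]
    constructor
    · intro h q
      rw [← hHapp]; rw [h]; rfl
    · intro h
      exact LinearMap.ext fun q => h q
  -- A := R ⧸ I, equivalence with range H
  set A := R ⧸ I
  let e2 : (R ⧸ I.restrictScalars K) ≃ₗ[K] A :=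
    Submodule.Quotient.restrictScalarsEquiv K I
  let e1 : (R ⧸ I.restrictScalars K) ≃ₗ[K] LinearMap.range H :=
    (Submodule.quotEquivOfEq (I.restrictScalars K) (LinearMap.ker H) hker.symm) ≪≫ₗ H.quotKerEquivRange
  haveI := hfin
  haveI : Module.Finite K A := Module.Finite.equiv ((e2.symm ≪≫ₗ e1).symm)
  -- the lifted functional on A
  have hΛ0 : I.restrictScalars K ≤ LinearMap.ker Λ := by
    intro p hp
    have := (hmem p).mp hp 1
    rwa [mul_one, LinearMap.mem_ker] at *
  let Λbar : Module.Dual K A :=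
    (Submodule.liftQ (I.restrictScalars K) Λ hΛ0) ∘ₗ e2.symm.toLinearMap
  have hΛbar : ∀ p : R, Λbar (Ideal.Quotient.mk I p) = Λ p := by
    intro p
    show (Submodule.liftQ (I.restrictScalars K) Λ hΛ0) (e2.symm (Ideal.Quotient.mk I p)) = Λ p
    have : e2.symm (Ideal.Quotient.mk I p) = Submodule.Quotient.mk p :=
      Submodule.Quotient.restrictScalarsEquiv_symm_mk K I p
    rw [this, Submodule.liftQ_apply]
  -- multiplication pairing on A
  let B : A →ₗ[K] Module.Dual K A := (LinearMap.mul K A).compr₂ Λbar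
  have hB : ∀ p q : R, B (Ideal.Quotient.mk I p) (Ideal.Quotient.mk I q) = Λ (p * q) := by
    intro p q
    show Λbar (Ideal.Quotient.mk I p * Ideal.Quotient.mk I q) = Λ (p * q)
    rw [← map_mul, hΛbar]
  have hBinj : Function.Injective B := by
    rw [← LinearMap.ker_eq_bot, eq_bot_iff]
    intro a ha
    obtain ⟨p, rfl⟩ := Ideal.Quotient.mk_surjective (I := I) a
    rw [LinearMap.mem_ker] at ha
    have hpI : p ∈ I := (hmem p).mpr fun q => by
      rw [← hB p q, ha]; rfl
    rw [Submodule.mem_bot]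
    exact Ideal.Quotient.eq_zero_iff_mem.mpr hpI
  have hBsurj : Function.Surjective B :=
    (LinearMap.injective_iff_surjective_of_finrank_eq_finrank
      Subspace.dual_finrank_eq.symm).mp hBinj
  constructor
  · ext f
    simp only [LinearMap.mem_range]
    constructor
    · rintro ⟨g, rfl⟩
      obtain ⟨a, rfl⟩ := hBsurj g
      obtain ⟨p, rfl⟩ := Ideal.Quotient.mk_surjective (I := I) a
      refine ⟨p, ?_⟩
      apply LinearMap.ext
      intro q
      show H p q = B (Ideal.Quotient.mk I p) ((Ideal.Quotient.mkₐ K I) q)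
      rw [hHapp]
      exact (hB p q).symm
    · rintro ⟨p, rfl⟩
      refine ⟨B (Ideal.Quotient.mk I p), ?_⟩
      apply LinearMap.ext
      intro q
      show B (Ideal.Quotient.mk I p) ((Ideal.Quotient.mkₐ K I) q) = H p q
      rw [hHapp]
      exact hB p q
  · intro p hp
    exact Ideal.Quotient.eq_zero_iff_mem.mpr ((hmem p).mpr hp)
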